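/- Let q ≤ 1 be real. For every s ≥ 1 one has ∫_1^s ∫_1^ρ (σ+1)^(1−q)/σ dσ dρ ≤ (2^(1−q) / ((2−q)·D_q)) · s^(2−q) · L_q(s), where D_q := 1 − q if q < 1 and D_q := 1 if q = 1. -/

import Mathlib

open Real

theorem stmt5 (q : ℝ) (hq : q ≤ 1) :
    ∀ s ≥ (1:ℝ),
      (∫ ρ in (1:ℝ)..s, ∫ σ in (1:ℝ)..ρ, (σ + 1) ^ (1 - q) / σ) ≤
        ((2:ℝ) ^ (1 - q) / ((2 - q) * (if q < 1 then 1 - q else 1))) * s ^ (2 - q) *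
          (if q < 1 then 1 else Real.log s) := by
  intro s hs
  rcases eq_or_lt_of_le hq with hq1 | hq1
  · -- case q = 1
    subst hq1
    simp only [sub_self, Real.rpow_zero, if_neg (lt_irrefl (1:ℝ))]
    have hinner : Set.EqOn (fun ρ : ℝ => ∫ σ in (1:ℝ)..ρ, 1 / σ)
        (fun ρ : ℝ => Real.log ρ) (Set.uIcc 1 s) := by
      intro ρ hρ
      rw [Set.uIcc_of_le hs] at hρ
      simp only
      rw [integral_one_div, div_one]
      rw [Set.uIcc_of_le hρ.1]
      intro h0
      exact absurd h0.1 (by norm_num)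
    rw [intervalIntegral.integral_congr hinner]
    rw [integral_log]
    have hlog : 0 ≤ Real.log s := Real.log_nonneg hs
    have hrw : (1:ℝ) / ((2 - 1) * 1) * s ^ (2 - (1:ℝ)) = s := by
      norm_num
    rw [hrw]
    simp only [Real.log_one]
    nlinarith [Real.log_nonneg hs]
  · -- case q < 1
    have hq2 : (0:ℝ) < 1 - q := by linarith
    have hq3 : (0:ℝ) < 2 - q := by linarith
    have h2pos : (0:ℝ) < (2:ℝ) ^ (1 - q) := Real.rpow_pos_of_pos (by norm_num) _
    set f : ℝ → ℝ := fun σ => (σ + 1) ^ (1 - q) / σ with hf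
    have hfc : ContinuousOn f (Set.Ici (1:ℝ)) := by
      apply ContinuousOn.div
      · exact (continuousOn_id.add continuousOn_const).rpow_const
          (fun x _ => Or.inr hq2.le)
      · exact continuousOn_id
      · intro x hx
        exact ne_of_gt (lt_of_lt_of_le zero_lt_one hx)
    have hfint : ∀ ρ ∈ Set.Icc (1:ℝ) s, IntervalIntegrable f MeasureTheory.volume 1 ρ := by
      intro ρ hρ
      apply ContinuousOn.intervalIntegrable
      apply hfc.mono
      rw [Set.uIcc_of_le hρ.1]
      exact Set.Icc_subset_Ici_self
    set g : ℝ → ℝ := fun σ => (2:ℝ) ^ (1 - q) * σ ^ (-q) with hg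
    have hgc : ContinuousOn g (Set.Ici (1:ℝ)) := by
      apply ContinuousOn.mul continuousOn_const
      exact continuousOn_id.rpow_const
        (fun x hx => Or.inl (ne_of_gt (lt_of_lt_of_le zero_lt_one hx)))
    have hGle : ∀ ρ ∈ Set.Icc (1:ℝ) s,
        (∫ σ in (1:ℝ)..ρ, f σ) ≤ 2 ^ (1 - q) / (1 - q) * ρ ^ (1 - q) := by
      intro ρ hρ
      have hρ1 : (1:ℝ) ≤ ρ := hρ.1
      have step1 : (∫ σ in (1:ℝ)..ρ, f σ) ≤ ∫ σ in (1:ℝ)..ρ, g σ := by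
        apply intervalIntegral.integral_mono_on hρ1 (hfint ρ hρ)
        · apply ContinuousOn.intervalIntegrable
          apply hgc.mono
          rw [Set.uIcc_of_le hρ1]
          exact Set.Icc_subset_Ici_self
        · intro σ hσ
          have hσ0 : (0:ℝ) < σ := lt_of_lt_of_le zero_lt_one hσ.1
          have h1 : (σ + 1) ^ (1 - q) ≤ (2 * σ) ^ (1 - q) :=
            Real.rpow_le_rpow (by linarith) (by linarith [hσ.1]) hq2.le
          have h2 : ((2:ℝ) * σ) ^ (1 - q) = 2 ^ (1 - q) * σ ^ (1 - q) :=
            Real.mul_rpow (by norm_num) hσ0.le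
          have h3 : σ ^ (-q) = σ ^ (1 - q) / σ := by
            rw [show -q = (1 - q) - 1 by ring, Real.rpow_sub hσ0, Real.rpow_one]
          show (σ + 1) ^ (1 - q) / σ ≤ 2 ^ (1 - q) * σ ^ (-q)
          rw [h3, ← mul_div_assoc, ← h2]
          gcongr
      have step2 : (∫ σ in (1:ℝ)..ρ, g σ) = 2 ^ (1 - q) * ((ρ ^ (1 - q) - 1) / (1 - q)) := by
        rw [hg]
        rw [intervalIntegral.integral_const_mul]
        rw [integral_rpow (Or.inl (by linarith))]
        rw [Real.one_rpow, show -q + 1 = 1 - q by ring]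
      refine le_trans step1 ?_
      rw [step2]
      have hρpow : (0:ℝ) ≤ ρ ^ (1 - q) := Real.rpow_nonneg (by linarith) _
      rw [div_mul_eq_mul_div, mul_div_assoc]
      apply mul_le_mul_of_nonneg_left _ h2pos.le
      apply div_le_div_of_nonneg_right _ hq2.le
      linarith
    have hfintS : MeasureTheory.IntegrableOn f (Set.uIcc 1 s) MeasureTheory.volume := by
      rw [Set.uIcc_of_le hs]
      exact (hfc.mono Set.Icc_subset_Ici_self).integrableOn_compact isCompact_Icc
    have hGint : IntervalIntegrable (fun ρ => ∫ σ in (1:ℝ)..ρ, f σ)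
        MeasureTheory.volume 1 s :=
      (intervalIntegral.continuousOn_primitive_interval hfintS).intervalIntegrable
    have hHint : IntervalIntegrable (fun ρ : ℝ => 2 ^ (1 - q) / (1 - q) * ρ ^ (1 - q))
        MeasureTheory.volume 1 s := by
      apply ContinuousOn.intervalIntegrable
      apply ContinuousOn.mul continuousOn_const
      apply continuousOn_id.rpow_const
      intro x _
      exact Or.inr hq2.le
    have main : (∫ ρ in (1:ℝ)..s, ∫ σ in (1:ℝ)..ρ, f σ) ≤
        ∫ ρ in (1:ℝ)..s, 2 ^ (1 - q) / (1 - q) * ρ ^ (1 - q) :=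
      intervalIntegral.integral_mono_on hs hGint hHint hGle
    have hcalc : (∫ ρ in (1:ℝ)..s, 2 ^ (1 - q) / (1 - q) * ρ ^ (1 - q)) =
        2 ^ (1 - q) / (1 - q) * ((s ^ (2 - q) - 1) / (2 - q)) := by
      rw [intervalIntegral.integral_const_mul]
      rw [integral_rpow (Or.inl (by linarith))]
      rw [Real.one_rpow, show (1:ℝ) - q + 1 = 2 - q by ring]
    rw [if_pos hq1, if_pos hq1, mul_one]
    refine le_trans main ?_
    rw [hcalc]
    have hspow : (0:ℝ) ≤ s ^ (2 - q) := Real.rpow_nonneg (by linarith) _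
    have h1 : 2 ^ (1 - q) / (1 - q) * ((s ^ (2 - q) - 1) / (2 - q)) ≤
        2 ^ (1 - q) / (1 - q) * (s ^ (2 - q) / (2 - q)) := by
      apply mul_le_mul_of_nonneg_left _ (by positivity)
      apply div_le_div_of_nonneg_right _ hq3.le
      linarith
    refine le_trans h1 ?_
    apply le_of_eq
    field_simp
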